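/- Let M be a labelled Markov chain over alphabet Σ and let A and A' be task automata over Σ with L(A) = L(A'). Then the product Markov chains M⊗A and M⊗A' are observationally equivalent. -/

import Mathlib

open scoped Classical

/-- A labelled Markov chain over a finite state type `S` and alphabet `Alph`. -/
structure LMC (S : Type) (Alph : Type) [Fintype S] where
  s0 : S
  P : S → S → ℝ
  P_nonneg : ∀ s s', 0 ≤ P s s'
  P_sum : ∀ s, ∑ s', P s s' = 1
  L : S → Alph

/-- A task automaton (DFA) over alphabet `Alph` with finite state set `Q`. -/
structure TA (Q : Type) (Alph : Type) [Fintype Q] where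
  q0 : Q
  δ : Q → Alph → Q
  F : Q → Bool

/-- Transition function of the product Markov chain `M ⊗ A`. -/
noncomputable def prodP {S Alph Q : Type} [Fintype S] [Fintype Q]
    (M : LMC S Alph) (A : TA Q Alph) (x y : S × Q) : ℝ :=
  if y.2 = A.δ x.2 (M.L y.1) then M.P x.1 y.1 else 0

/-- Probability of a finite observation sequence `o` in the product Markov chain `M ⊗ A`:
the sum over all hidden product-state sequences starting at `(s0, q0)` whose emissions
`Z (s, q) = (s, χ_F q)` match `o`, of the product of transition probabilities. -/
noncomputable def obsProb {S Alph Q : Type} [Fintype S] [Fintype Q]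
    (M : LMC S Alph) (A : TA Q Alph) (n : ℕ) (o : Fin (n + 1) → S × Bool) : ℝ :=
  ∑ x : Fin (n + 1) → S × Q,
    (if x 0 = (M.s0, A.q0) ∧ (∀ t, ((x t).1, A.F (x t).2) = o t) then
      ∏ t : Fin n, prodP M A (x t.castSucc) (x t.succ)
    else 0)

/-- Observational equivalence of two product Markov chains over the same `S` and `Alph`. -/
def ObsEquiv {S Alph Q₁ Q₂ : Type} [Fintype S] [Fintype Q₁] [Fintype Q₂]
    (M₁ : LMC S Alph) (A₁ : TA Q₁ Alph) (M₂ : LMC S Alph) (A₂ : TA Q₂ Alph) : Prop :=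
  ∀ (n : ℕ) (o : Fin (n + 1) → S × Bool), obsProb M₁ A₁ n o = obsProb M₂ A₂ n o

/-- The language accepted by a task automaton: words `w` with `δ*(q0, w) ∈ F`. -/
def taLang {Q Alph : Type} [Fintype Q] (A : TA Q Alph) : Set (List Alph) :=
  {w | A.F (w.foldl A.δ A.q0) = true}


/-- Deterministic state sequence of the automaton driven by labels `w 1, w 2, ...`. -/
def detQ {Q Alph : Type} [Fintype Q] (A : TA Q Alph) (w : ℕ → Alph) : ℕ → Q
  | 0 => A.q0
  | (t+1) => A.δ (detQ A w t) (w (t+1))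

lemma detQ_foldl {Q Alph : Type} [Fintype Q] (A : TA Q Alph) (w : ℕ → Alph) (t : ℕ) :
    detQ A w t = ((List.range t).map (fun i => w (i+1))).foldl A.δ A.q0 := by
  induction t with
  | zero => rfl
  | succ t ih =>
    rw [List.range_succ, List.map_append, List.foldl_append]
    simp [detQ, ih]

lemma F_detQ_eq {Q Q' Alph : Type} [Fintype Q] [Fintype Q']
    (A : TA Q Alph) (A' : TA Q' Alph) (h : taLang A = taLang A')
    (w : ℕ → Alph) (t : ℕ) :
    A.F (detQ A w t) = A'.F (detQ A' w t) := by
  have hw := Set.ext_iff.mp h ((List.range t).map (fun i => w (i+1)))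
  simp only [taLang, Set.mem_setOf_eq] at hw
  rw [detQ_foldl, detQ_foldl]
  rcases h1 : A.F (((List.range t).map (fun i => w (i+1))).foldl A.δ A.q0) <;>
    rcases h2 : A'.F (((List.range t).map (fun i => w (i+1))).foldl A'.δ A'.q0) <;>
    simp_all

/-- Clamp a `Fin (n+1)`-indexed sequence to a `ℕ`-indexed one. -/
def clampS {S : Type} (n : ℕ) (s : Fin (n+1) → S) : ℕ → S :=
  fun i => s ⟨min i n, Nat.lt_succ_of_le (Nat.min_le_right i n)⟩

lemma clampS_eq {S : Type} (n : ℕ) (s : Fin (n+1) → S) (i : ℕ) (hi : i ≤ n) :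
    clampS n s i = s ⟨i, Nat.lt_succ_of_le hi⟩ := by
  unfold clampS
  congr 1
  exact Fin.ext (by simp [Nat.min_eq_left hi])

lemma obsProb_eq {S Alph Q : Type} [Fintype S] [Fintype Q]
    (M : LMC S Alph) (A : TA Q Alph) (n : ℕ) (o : Fin (n + 1) → S × Bool) :
    obsProb M A n o = ∑ s : Fin (n + 1) → S,
      (if s 0 = M.s0 ∧ (∀ t : Fin (n+1),
          (s t, A.F (detQ A (fun i => M.L (clampS n s i)) t.val)) = o t) then
        ∏ t : Fin n, M.P (s t.castSucc) (s t.succ)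
      else 0) := by
  classical
  unfold obsProb
  rw [← Equiv.sum_comp (Equiv.arrowProdEquivProdArrow (Fin (n+1)) (fun _ => S) (fun _ => Q)).symm]
  rw [Fintype.sum_prod_type]
  refine Finset.sum_congr rfl (fun s _ => ?_)
  simp only [Equiv.arrowProdEquivProdArrow_symm_apply]
  set w : ℕ → Alph := fun i => M.L (clampS n s i) with hw
  set qd : Fin (n+1) → Q := fun t => detQ A w t.val with hqd
  rw [Finset.sum_eq_single qd]
  · -- main value
    have hcond : ((s 0, qd 0) = (M.s0, A.q0) ∧ ∀ t : Fin (n+1), (s t, A.F (qd t)) = o t)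
        ↔ (s 0 = M.s0 ∧ ∀ t : Fin (n+1), (s t, A.F (detQ A w t.val)) = o t) := by
      constructor
      · rintro ⟨h1, h2⟩
        exact ⟨(Prod.ext_iff.mp h1).1, h2⟩
      · rintro ⟨h1, h2⟩
        refine ⟨?_, h2⟩
        have : qd 0 = A.q0 := rfl
        rw [this, h1]
    rw [if_congr hcond ?_ rfl]
    refine Finset.prod_congr rfl (fun t _ => ?_)
    unfold prodP
    rw [if_pos]
    have hstep : qd t.succ = A.δ (qd t.castSucc) (w (t.val + 1)) := rfl
    have hwval : w (t.val + 1) = M.L (s t.succ) := by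
      show M.L (clampS n s (t.val + 1)) = M.L (s t.succ)
      rw [clampS_eq n s (t.val + 1) (Nat.succ_le_of_lt t.isLt)]
      congr 1
    rw [hstep, hwval]
  · -- other q-sequences contribute zero
    intro q _ hq
    by_cases h0 : ((fun t => (s t, q t)) 0 = (M.s0, A.q0) ∧
        ∀ t : Fin (n+1), (((fun t => (s t, q t)) t).1, A.F ((fun t => (s t, q t)) t).2) = o t)
    · rw [if_pos h0]
      by_contra hne
      apply hq
      have hfac : ∀ t : Fin n,
          prodP M A (s t.castSucc, q t.castSucc) (s t.succ, q t.succ) ≠ 0 := by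
        intro t ht0
        exact hne (Finset.prod_eq_zero (Finset.mem_univ t) ht0)
      have hstep : ∀ t : Fin n, q t.succ = A.δ (q t.castSucc) (M.L (s t.succ)) := by
        intro t
        by_contra hcc
        exact hfac t (by unfold prodP; rw [if_neg hcc])
      have hall : ∀ m, ∀ (hm : m < n + 1), q ⟨m, hm⟩ = detQ A w m := by
        intro m
        induction m with
        | zero =>
          intro hm
          have := congrArg Prod.snd h0.1
          exact this
        | succ m ih =>
          intro hm
          have hmn : m < n := Nat.lt_of_succ_lt_succ hm
          have ht := hstep ⟨m, hmn⟩
          have hwval : M.L (s (⟨m, hmn⟩ : Fin n).succ) = w (m + 1) := by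
            show _ = M.L (clampS n s (m + 1))
            rw [clampS_eq n s (m + 1) (Nat.succ_le_of_lt hmn)]
            congr 1
          have : q ⟨m + 1, hm⟩ = A.δ (q ⟨m, Nat.lt_succ_of_lt hmn⟩) (w (m + 1)) := by
            rw [← hwval]
            exact ht
          rw [this, ih (Nat.lt_succ_of_lt hmn)]
          rfl
      funext t
      rw [hqd]
      exact hall t.val t.isLt
    · rw [if_neg h0]
  · intro hqd'
    exact absurd (Finset.mem_univ qd) hqd'

/-- If two task automata accept the same language, the corresponding product Markov
chains with any labelled Markov chain `M` are observationally equivalent. -/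
theorem obsEquiv_of_lang_eq {S Alph Q Q' : Type} [Fintype S] [Fintype Q] [Fintype Q']
    (M : LMC S Alph) (A : TA Q Alph) (A' : TA Q' Alph)
    (h : taLang A = taLang A') : ObsEquiv M A M A' := by
  intro n o
  rw [obsProb_eq M A, obsProb_eq M A']
  refine Finset.sum_congr rfl (fun s _ => ?_)
  have key : ∀ t : Fin (n+1),
      A.F (detQ A (fun i => M.L (clampS n s i)) t.val)
        = A'.F (detQ A' (fun i => M.L (clampS n s i)) t.val) :=
    fun t => F_detQ_eq A A' h _ t.val
  simp only [key]
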